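/- For every integer m ≥ 4 there do not exist natural numbers d_1, d_2 and polynomials f_1, f_2 ∈ ℤ[x_1,…,x_m] with f_1 homogeneous of degree d_1 and f_2 homogeneous of degree d_2, such that for every m-tuple (a_1,…,a_m) of positive integers with sum n, ind((a_1,…,a_m), (n)) = gcd(f_1(a_1,…,a_m), f_2(a_1,…,a_m)), where the gcd of two integers is taken to be a nonnegative integer. -/

import Mathlib

open scoped Classical

/-- Vertices `j` and `k` of `{1,…,n}` (encoded as `Fin n`, vertex `v` is `v+1`) are joined by
an edge determined by the composition `a`. -/
def CompEdge {n : ℕ} (a : Composition n) (j k : Fin n) : Prop :=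
  j ≠ k ∧ ∃ i : Fin a.length,
    a.sizeUpTo i < (j : ℕ) + 1 ∧ (j : ℕ) + 1 ≤ a.sizeUpTo (i + 1) ∧
    a.sizeUpTo i < (k : ℕ) + 1 ∧ (k : ℕ) + 1 ≤ a.sizeUpTo (i + 1) ∧
    ((j : ℕ) + 1) + ((k : ℕ) + 1) = 2 * a.sizeUpTo i + a.blocksFun i + 1

lemma CompEdge.symm {n : ℕ} {a : Composition n} {j k : Fin n} (h : CompEdge a j k) :
    CompEdge a k j := by
  obtain ⟨hne, i, h1, h2, h3, h4, h5⟩ := h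
  exact ⟨hne.symm, i, h3, h4, h1, h2, by omega⟩

/-- The meander `M(a|b)` of the pair of compositions `(a, b)` of `n`. -/
def Meander {n : ℕ} (a b : Composition n) : SimpleGraph (Fin n) where
  Adj j k := CompEdge a j k ∨ CompEdge b j k
  symm := by
    refine ⟨fun j k h => ?_⟩
    rcases h with h | h
    · exact Or.inl h.symm
    · exact Or.inr h.symm
  loopless := by
    refine ⟨fun j h => ?_⟩
    rcases h with ⟨hne, _⟩ | ⟨hne, _⟩ <;> exact hne rfl

/-- A connected component of the meander is a cycle if each of its vertices is incident
to both a top edge and a bottom edge. -/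
def IsCycleComp {n : ℕ} (a b : Composition n) (c : (Meander a b).ConnectedComponent) : Prop :=
  ∀ v : Fin n, (Meander a b).connectedComponentMk v = c →
    (∃ w, CompEdge a v w) ∧ (∃ w, CompEdge b v w)

/-- The number of cycle components of the meander `M(a|b)`. -/
noncomputable def cycleCount {n : ℕ} (a b : Composition n) : ℕ :=
  Nat.card {c : (Meander a b).ConnectedComponent // IsCycleComp a b c}

/-- The number of path components of the meander `M(a|b)`. -/
noncomputable def pathCount {n : ℕ} (a b : Composition n) : ℕ :=
  Nat.card {c : (Meander a b).ConnectedComponent // ¬ IsCycleComp a b c}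

/-- The index `ind(a,b) = 2C + P - 1` of a pair of compositions of `n`. -/
noncomputable def seaweedInd {n : ℕ} (a b : Composition n) : ℕ :=
  2 * cycleCount a b + pathCount a b - 1

/-- `C(n,k)`: the number of ordered pairs of compositions of `n` of index `k`. -/
noncomputable def Cnk (n k : ℕ) : ℕ :=
  Nat.card {p : Composition n × Composition n // seaweedInd p.1 p.2 = k}

/-- The composition of `n` with the given list of positive parts. -/
def compOfList (n : ℕ) (l : List ℕ) (hpos : ∀ x ∈ l, 0 < x) (hsum : l.sum = n) :
    Composition n :=
  ⟨l, fun hi => hpos _ hi, hsum⟩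

/-! ### Auxiliary lemmas -/

section Aux

lemma sizeUpTo_replicate {n M c : ℕ} (C : Composition n) (hb : C.blocks = List.replicate M c)
    (i : ℕ) : C.sizeUpTo i = c * min i M := by
  simp [Composition.sizeUpTo, hb, List.take_replicate, List.sum_replicate, Nat.mul_comm]

lemma length_replicate {n M c : ℕ} (C : Composition n) (hb : C.blocks = List.replicate M c) :
    C.length = M := by
  simp [Composition.length, hb]

lemma n_eq_replicate {n M c : ℕ} (C : Composition n) (hb : C.blocks = List.replicate M c) :
    n = c * M := by
  have h := C.blocks_sum
  rw [hb, List.sum_replicate, smul_eq_mul] at h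
  rw [← h, Nat.mul_comm]

/-- For the composition with all blocks of size 1 there are no edges. -/
lemma compEdge_ones {n M : ℕ} (C : Composition n) (hb : C.blocks = List.replicate M 1)
    (j k : Fin n) : ¬ CompEdge C j k := by
  rintro ⟨hne, i, h1, h2, h3, h4, h5⟩
  have hi : (i : ℕ) < M := Nat.lt_of_lt_of_eq i.2 (length_replicate C hb)
  rw [sizeUpTo_replicate C hb] at h1 h2 h3 h4
  apply hne
  apply Fin.ext
  omega

/-- For the composition with all blocks of size 2, edges pair `2i` with `2i+1`. -/
lemma compEdge_twos {n M : ℕ} (C : Composition n) (hb : C.blocks = List.replicate M 2)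
    (j k : Fin n) : CompEdge C j k ↔ j ≠ k ∧ (j : ℕ) / 2 = (k : ℕ) / 2 := by
  have hn2 : n = 2 * M := n_eq_replicate C hb
  constructor
  · rintro ⟨hne, i, h1, h2, h3, h4, h5⟩
    have hi : (i : ℕ) < M := Nat.lt_of_lt_of_eq i.2 (length_replicate C hb)
    rw [sizeUpTo_replicate C hb] at h1 h2 h3 h4
    exact ⟨hne, by omega⟩
  · rintro ⟨hne, hdiv⟩
    have hj : (j : ℕ) < n := j.2
    have hk : (k : ℕ) < n := k.2
    have hlen : C.length = M := length_replicate C hb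
    have hjM : (j : ℕ) / 2 < C.length := by omega
    refine ⟨hne, ⟨(j : ℕ) / 2, hjM⟩, ?_⟩
    have hsucc := C.sizeUpTo_succ' ⟨(j : ℕ) / 2, hjM⟩
    have hb1 : C.sizeUpTo ((j : ℕ) / 2) = 2 * min ((j : ℕ) / 2) M :=
      sizeUpTo_replicate C hb _
    have hb2 : C.sizeUpTo ((j : ℕ) / 2 + 1) = 2 * min ((j : ℕ) / 2 + 1) M :=
      sizeUpTo_replicate C hb _
    have hnev : (j : ℕ) ≠ (k : ℕ) := fun h => hne (Fin.ext h)
    simp only [] at hsucc ⊢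
    omega

/-- For the one-block composition `(n)`, edges pair `j` with `n-1-j`. -/
lemma compEdge_single {n : ℕ} (C : Composition n) (hb : C.blocks = [n]) (hn : 0 < n)
    (j k : Fin n) : CompEdge C j k ↔ j ≠ k ∧ (j : ℕ) + (k : ℕ) + 2 = n + 1 := by
  have hlen : C.length = 1 := by simp [Composition.length, hb]
  have hs0 : C.sizeUpTo 0 = 0 := Composition.sizeUpTo_zero C
  have hs1 : C.sizeUpTo (0 + 1) = n := by
    rw [Nat.zero_add, ← hlen, Composition.sizeUpTo_length]
  have hj : (j : ℕ) < n := j.2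
  have hk : (k : ℕ) < n := k.2
  constructor
  · rintro ⟨hne, i, h1, h2, h3, h4, h5⟩
    have hi0 : (i : ℕ) = 0 := by have := i.2; omega
    have hsucc := C.sizeUpTo_succ' i
    rw [hi0, hs0, hs1] at hsucc
    rw [hi0, hs0] at h5
    exact ⟨hne, by omega⟩
  · rintro ⟨hne, hsum⟩
    have h0 : (0 : ℕ) < C.length := by omega
    refine ⟨hne, ⟨0, h0⟩, ?_⟩
    have hsucc := C.sizeUpTo_succ' ⟨0, h0⟩
    simp only [] at hsucc ⊢
    rw [hs0, hs1] at hsucc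
    rw [hs0, hs1]
    omega

/-- Count of connected components via an invariant map. -/
lemma card_cc {V β : Type*} (G : SimpleGraph V) (φ : V → β)
    (hadj : ∀ v w, G.Adj v w → φ v = φ w)
    (hsurj : Function.Surjective φ)
    (hinj : ∀ v w, φ v = φ w → G.Reachable v w) :
    Nat.card G.ConnectedComponent = Nat.card β := by
  have hwalk : ∀ (v w : V), G.Walk v w → φ v = φ w := by
    intro v w p
    induction p with
    | nil => rfl
    | cons h q ih => exact (hadj _ _ h).trans ih
  refine Nat.card_congr
    (Equiv.ofBijective (SimpleGraph.ConnectedComponent.lift φ (fun v w p _ => hwalk v w p))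
      ⟨?_, ?_⟩)
  · intro c d
    refine SimpleGraph.ConnectedComponent.ind₂ (fun v w => ?_) c d
    intro h
    simp only [SimpleGraph.ConnectedComponent.lift_mk] at h
    exact SimpleGraph.ConnectedComponent.sound (hinj _ _ h)
  · intro b
    obtain ⟨v, rfl⟩ := hsurj b
    exact ⟨G.connectedComponentMk v, rfl⟩

/-- The index of the meander of `(1,1,…,1)` (M parts) over `(M)`. -/
lemma seaweed_ones {n M : ℕ} (hM : 4 ≤ M) (A B : Composition n)
    (hA : A.blocks = List.replicate M 1) (hB : B.blocks = [n]) :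
    seaweedInd A B = (M + 1) / 2 - 1 := by
  have hn : n = M := by have := n_eq_replicate A hA; omega
  have hn0 : 0 < n := by omega
  have hadj : ∀ j k, (Meander A B).Adj j k ↔
      (j ≠ k ∧ (j : ℕ) + (k : ℕ) + 2 = n + 1) := by
    intro j k
    constructor
    · rintro (h | h)
      · exact absurd h (compEdge_ones A hA j k)
      · exact (compEdge_single B hB hn0 j k).1 h
    · intro h
      exact Or.inr ((compEdge_single B hB hn0 j k).2 h)
  have hnocyc : ∀ c : (Meander A B).ConnectedComponent, ¬ IsCycleComp A B c := by
    intro c hc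
    obtain ⟨v, hv⟩ := c.exists_rep
    obtain ⟨⟨w, hw⟩, -⟩ := hc v hv
    exact compEdge_ones A hA v w hw
  have hcyc : cycleCount A B = 0 := by
    have : IsEmpty {c : (Meander A B).ConnectedComponent // IsCycleComp A B c} :=
      ⟨fun ⟨c, hc⟩ => hnocyc c hc⟩
    exact Nat.card_of_isEmpty
  have hpath : pathCount A B = (M + 1) / 2 := by
    unfold pathCount
    rw [Nat.card_congr (Equiv.subtypeUnivEquiv hnocyc)]
    have key : Nat.card (Meander A B).ConnectedComponent = Nat.card (Fin ((n + 1) / 2)) := by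
      apply card_cc (Meander A B)
        (fun v : Fin n => (⟨min (v : ℕ) (n - 1 - (v : ℕ)), by have := v.2; omega⟩ :
          Fin ((n + 1) / 2)))
      · intro v w hvw
        rw [hadj] at hvw
        have h2 := hvw.2
        simp only [Fin.mk.injEq]
        have := v.2; have := w.2
        omega
      · intro b
        refine ⟨⟨(b : ℕ), by have := b.2; omega⟩, ?_⟩
        apply Fin.ext
        simp only []
        have := b.2
        omega
      · intro v w hvw
        have hvw' : (min (v : ℕ) (n - 1 - (v : ℕ))) = (min (w : ℕ) (n - 1 - (w : ℕ))) := by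
          have h := congrArg Fin.val hvw
          simpa using h
        by_cases hvw2 : v = w
        · exact hvw2 ▸ SimpleGraph.Reachable.refl _
        · have hsum : (v : ℕ) + (w : ℕ) + 2 = n + 1 := by
            have hne : (v : ℕ) ≠ (w : ℕ) := fun h => hvw2 (Fin.ext h)
            have := v.2; have := w.2
            omega
          exact ((hadj v w).2 ⟨hvw2, hsum⟩).reachable
    rw [key, Nat.card_eq_fintype_card, Fintype.card_fin, hn]
  unfold seaweedInd
  rw [hcyc, hpath]
  omega

/-- The index of the meander of `(2,2,…,2)` (M parts) over `(2M)`. -/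
lemma seaweed_twos {n M : ℕ} (hM : 4 ≤ M) (A B : Composition n)
    (hA : A.blocks = List.replicate M 2) (hB : B.blocks = [n]) :
    seaweedInd A B = 2 * ((M + 1) / 2) - 1 := by
  have hn : n = 2 * M := n_eq_replicate A hA
  have hn0 : 0 < n := by omega
  have htop : ∀ j k, CompEdge A j k ↔ j ≠ k ∧ (j : ℕ) / 2 = (k : ℕ) / 2 :=
    compEdge_twos A hA
  have hbot : ∀ j k, CompEdge B j k ↔ j ≠ k ∧ (j : ℕ) + (k : ℕ) + 2 = n + 1 :=
    compEdge_single B hB hn0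
  have hallcyc : ∀ c : (Meander A B).ConnectedComponent, IsCycleComp A B c := by
    intro c v _
    have hv2 := v.2
    constructor
    · by_cases hpar : (v : ℕ) % 2 = 0
      · refine ⟨⟨(v : ℕ) + 1, by omega⟩, (htop _ _).2 ⟨?_, by simp only []; omega⟩⟩
        intro h
        have h' := congrArg Fin.val h
        simp only [] at h'
        omega
      · refine ⟨⟨(v : ℕ) - 1, by omega⟩, (htop _ _).2 ⟨?_, by simp only []; omega⟩⟩
        intro h
        have h' := congrArg Fin.val h
        simp only [] at h'
        omega
    · refine ⟨⟨n - 1 - (v : ℕ), by omega⟩, (hbot _ _).2 ⟨?_, by simp only []; omega⟩⟩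
      intro h
      have h' := congrArg Fin.val h
      simp only [] at h'
      omega
  have hpath : pathCount A B = 0 := by
    have : IsEmpty {c : (Meander A B).ConnectedComponent // ¬ IsCycleComp A B c} :=
      ⟨fun ⟨c, hc⟩ => hc (hallcyc c)⟩
    exact Nat.card_of_isEmpty
  have hcyc : cycleCount A B = (M + 1) / 2 := by
    unfold cycleCount
    rw [Nat.card_congr (Equiv.subtypeUnivEquiv hallcyc)]
    have key : Nat.card (Meander A B).ConnectedComponent = Nat.card (Fin ((M + 1) / 2)) := by
      apply card_cc (Meander A B)
        (fun v : Fin n => (⟨min ((v : ℕ) / 2) (M - 1 - (v : ℕ) / 2), by have := v.2; omega⟩ :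
          Fin ((M + 1) / 2)))
      · intro v w hvw
        simp only [Fin.mk.injEq]
        rcases hvw with h | h
        · rw [htop] at h
          rw [h.2]
        · rw [hbot] at h
          have := v.2; have := w.2
          omega
      · intro b
        refine ⟨⟨2 * (b : ℕ), by have := b.2; omega⟩, ?_⟩
        apply Fin.ext
        simp only []
        have := b.2
        omega
      · intro v w hvw
        have hvw' : (min ((v : ℕ) / 2) (M - 1 - (v : ℕ) / 2))
            = (min ((w : ℕ) / 2) (M - 1 - (w : ℕ) / 2)) := by
          have h := congrArg Fin.val hvw
          simpa using h
        have hhalf : ∀ v w : Fin n, (v : ℕ) / 2 = (w : ℕ) / 2 →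
            (Meander A B).Reachable v w := by
          intro v w h
          by_cases hvw2 : v = w
          · exact hvw2 ▸ SimpleGraph.Reachable.refl _
          · exact (SimpleGraph.Adj.reachable (Or.inl ((htop v w).2 ⟨hvw2, h⟩)))
        have hv2 := v.2; have hw2 := w.2
        rcases (by omega : (v : ℕ) / 2 = (w : ℕ) / 2 ∨
            (v : ℕ) / 2 + (w : ℕ) / 2 + 2 = M + 1) with h | h
        · exact hhalf v w h
        · set u : Fin n := ⟨n - 1 - (v : ℕ), by omega⟩ with hu
          have huadj : (Meander A B).Adj v u := by
            refine Or.inr ((hbot v u).2 ⟨?_, by simp only [hu]; omega⟩)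
            intro hh
            have h' := congrArg Fin.val hh
            simp only [hu] at h'
            omega
          have hu2 : (u : ℕ) / 2 = (w : ℕ) / 2 := by
            simp only [hu]
            omega
          exact huadj.reachable.trans (hhalf u w hu2)
    rw [key, Nat.card_eq_fintype_card, Fintype.card_fin]
  unfold seaweedInd
  rw [hcyc, hpath]
  omega

/-- Evaluation of a homogeneous polynomial at the constant-2 point. -/
lemma eval_const_two {m d : ℕ} {f : MvPolynomial (Fin m) ℤ} (hf : f.IsHomogeneous d) :
    MvPolynomial.eval (fun _ => (2 : ℤ)) f
      = 2 ^ d * MvPolynomial.eval (fun _ => (1 : ℤ)) f := by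
  rw [MvPolynomial.eval_eq', MvPolynomial.eval_eq', Finset.mul_sum]
  refine Finset.sum_congr rfl fun v hv => ?_
  have hdeg : ∑ i ∈ v.support, v i = d := by
    have h := hf (MvPolynomial.mem_support_iff.mp hv)
    simpa [Finsupp.weight_apply, Finsupp.sum, smul_eq_mul] using h
  have hdeg' : ∑ i, v i = d := by
    rw [← hdeg]
    exact (Finset.sum_subset (Finset.subset_univ _)
      (fun x _ hx => Finsupp.notMem_support_iff.mp hx)).symm
  simp only [one_pow, Finset.prod_const_one, mul_one]
  rw [Finset.prod_pow_eq_pow_sum, hdeg']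
  ring

end Aux

theorem no_linear_gcd_formula (m : ℕ) (hm : 4 ≤ m) :
    ¬ ∃ (d₁ d₂ : ℕ) (f₁ f₂ : MvPolynomial (Fin m) ℤ),
        f₁.IsHomogeneous d₁ ∧ f₂.IsHomogeneous d₂ ∧
        ∀ (a : Fin m → ℕ) (ha : ∀ i, 0 < a i),
          seaweedInd
            (compOfList (∑ i, a i) (List.ofFn a)
              (by intro x hx; obtain ⟨i, rfl⟩ := List.mem_ofFn.mp hx; exact ha i)
              (by rw [List.sum_ofFn]))
            (compOfList (∑ i, a i) [∑ i, a i]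
              (by
                intro x hx; simp only [List.mem_singleton] at hx; subst hx
                have hm0 : 0 < m := by omega
                exact Finset.sum_pos (fun i _ => ha i) ⟨⟨0, hm0⟩, Finset.mem_univ _⟩)
              (by simp)) =
          Int.gcd (MvPolynomial.eval (fun i => (a i : ℤ)) f₁)
            (MvPolynomial.eval (fun i => (a i : ℤ)) f₂) := by
  rintro ⟨d₁, d₂, f₁, f₂, h₁, h₂, hf⟩
  have hE1 := hf (fun _ => 1) (fun _ => one_pos)
  have hE2 := hf (fun _ => 2) (fun _ => two_pos)
  rw [seaweed_ones hm _ _ (List.ofFn_const m 1) rfl] at hE1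
  rw [seaweed_twos hm _ _ (List.ofFn_const m 2) rfl] at hE2
  simp only [Nat.cast_one] at hE1
  simp only [Nat.cast_ofNat] at hE2
  rw [eval_const_two h₁, eval_const_two h₂] at hE2
  set g₁ : ℤ := MvPolynomial.eval (fun _ => (1 : ℤ)) f₁ with hg₁
  set g₂ : ℤ := MvPolynomial.eval (fun _ => (1 : ℤ)) f₂ with hg₂
  set K : ℕ := (m + 1) / 2 - 1 with hK
  have hK1 : 1 ≤ K := by omega
  have hgcd1 : Int.gcd g₁ g₂ = K := hE1.symm
  have hgcd2 : Int.gcd (2 ^ d₁ * g₁) (2 ^ d₂ * g₂) = 2 * K + 1 := by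
    rw [← hE2]
    omega
  have hdvd1 : (K : ℤ) ∣ g₁ := hgcd1 ▸ Int.gcd_dvd_left g₁ g₂
  have hdvd2 : (K : ℤ) ∣ g₂ := hgcd1 ▸ Int.gcd_dvd_right g₁ g₂
  have hdvdL : (K : ℤ) ∣ ((2 * K + 1 : ℕ) : ℤ) := by
    rw [← hgcd2]
    exact Int.dvd_coe_gcd (Dvd.dvd.mul_left hdvd1 _) (Dvd.dvd.mul_left hdvd2 _)
  have hKdvd : K ∣ 2 * K + 1 := Int.ofNat_dvd.mp (by exact_mod_cast hdvdL)
  have hKeq : K = 1 := by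
    have h1 : K ∣ 1 := (Nat.dvd_add_right (dvd_mul_left K 2)).mp hKdvd
    exact Nat.dvd_one.mp h1
  rw [hKeq] at hgcd1 hgcd2
  have hp3 : Prime (3 : ℤ) := Int.prime_three
  have h3dvd : ∀ (d : ℕ) (g : ℤ), (3 : ℤ) ∣ 2 ^ d * g → (3 : ℤ) ∣ g := by
    intro d g h
    rcases hp3.dvd_mul.mp h with h | h
    · exfalso
      have := hp3.dvd_of_dvd_pow h
      norm_num at this
    · exact h
  have hgd : ((3 : ℕ) : ℤ) ∣ ((Int.gcd (2 ^ d₁ * g₁) (2 ^ d₂ * g₂) : ℕ) : ℤ) := by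
    rw [hgcd2]
  have h31 : (3 : ℤ) ∣ g₁ := h3dvd d₁ g₁ (by exact_mod_cast hgd.trans (Int.gcd_dvd_left _ _))
  have h32 : (3 : ℤ) ∣ g₂ := h3dvd d₂ g₂ (by exact_mod_cast hgd.trans (Int.gcd_dvd_right _ _))
  have hfin : (3 : ℤ) ∣ ((Int.gcd g₁ g₂ : ℕ) : ℤ) := Int.dvd_coe_gcd h31 h32
  rw [hgcd1] at hfin
  norm_num at hfin
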